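/- Let m ≥ 4 and let p : Fin m → ℝ² be the vertices of a convex polygon listed in circular order. Let the index set Fin m be partitioned into three disjoint sets I_A, I_B, I_C. Suppose the vertices of one of the parts are separated by vertices of the others in the circular order: there exist indices i₁ < i₂ < i₃ < i₄ in Fin m such that i₁ and i₃ belong to the same part T ∈ {I_A, I_B, I_C} while i₂ and i₄ do not belong to T. Set A = p '' I_A, B = p '' I_B, C = p '' I_C. Then convexHull ℝ (A ∪ B ∪ C) ⊆ convexHull ℝ (A ∪ B) ∪ convexHull ℝ (A ∪ C) ∪ convexHull ℝ (B ∪ C). -/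

import Mathlib

/-- The signed area (cross product) of the triangle `o, a, b` in the plane. -/
def cross2 (o a b : Fin 2 → ℝ) : ℝ :=
  (a 0 - o 0) * (b 1 - o 1) - (a 1 - o 1) * (b 0 - o 0)

/-- `p : Fin m → ℝ²` lists the vertices of a convex polygon in circular order:
for every index `i`, all points `p j` with `j ∉ {i, i+1}` lie strictly on the same
side of the line through `p i` and `p (i+1)` (indices taken mod `m`). -/
def InCircularConvexPosition {m : ℕ} [NeZero m] (p : Fin m → (Fin 2 → ℝ)) : Prop :=
  ∀ i j k : Fin m, j ≠ i → j ≠ i + 1 → k ≠ i → k ≠ i + 1 →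
    0 < cross2 (p i) (p (i + 1)) (p j) * cross2 (p i) (p (i + 1)) (p k)


open Fin.NatCast

lemma cross2_rot (o a b : Fin 2 → ℝ) : cross2 o a b = cross2 a b o := by
  unfold cross2; ring

lemma cross2_swap (o a b : Fin 2 → ℝ) : cross2 o a b = -cross2 o b a := by
  unfold cross2; ring

lemma cross2_self' (o a : Fin 2 → ℝ) : cross2 o a o = 0 := by unfold cross2; ring
lemma cross2_self'' (o b : Fin 2 → ℝ) : cross2 o b b = 0 := by unfold cross2; ring
lemma cross2_same (b z : Fin 2 → ℝ) : cross2 b b z = 0 := by unfold cross2; ring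

/-- Cramer / barycentric identity. -/
lemma cramer (P Q R X U V : Fin 2 → ℝ) :
    cross2 P Q R * cross2 U V X =
      cross2 X Q R * cross2 U V P + cross2 P X R * cross2 U V Q +
        cross2 P Q X * cross2 U V R := by
  unfold cross2; ring

lemma cross2_sum (P Q R X : Fin 2 → ℝ) :
    cross2 X Q R + cross2 P X R + cross2 P Q X = cross2 P Q R := by
  unfold cross2; ring

lemma sign_trans {a b c : ℝ} (h1 : 0 < a * c) (h2 : 0 < b * c) : 0 < a * b := by
  rcases mul_pos_iff.mp h1 with ⟨ha, hc⟩ | ⟨ha, hc⟩ <;>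
    rcases mul_pos_iff.mp h2 with ⟨hb, hc'⟩ | ⟨hb, hc'⟩ <;>
      first | exact mul_pos ha hb | exact mul_pos_of_neg_of_neg ha hb | linarith

lemma cross2_affine (o u a c : Fin 2 → ℝ) (t : ℝ) :
    cross2 o u ((1 - t) • a + t • c) = (1 - t) * cross2 o u a + t * cross2 o u c := by
  simp only [cross2, Pi.add_apply, Pi.smul_apply, smul_eq_mul]; ring

lemma eq_of_coords {a b : Fin 2 → ℝ} (h0 : a 0 = b 0) (h1 : a 1 = b 1) : a = b := by
  funext i; fin_cases i <;> assumption

lemma coll {a b c : Fin 2 → ℝ} (hab : a ≠ b) (h : cross2 a b c = 0) :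
    ∃ r : ℝ, c = (1 - r) • a + r • b := by
  unfold cross2 at h
  have hne : a 0 ≠ b 0 ∨ a 1 ≠ b 1 := by
    by_contra hc
    push_neg at hc
    exact hab (eq_of_coords hc.1 hc.2)
  rcases hne with hne | hne
  · have hd : b 0 - a 0 ≠ 0 := sub_ne_zero.mpr (Ne.symm hne)
    refine ⟨(c 0 - a 0) / (b 0 - a 0), eq_of_coords ?_ ?_⟩ <;>
        simp only [Pi.add_apply, Pi.smul_apply, smul_eq_mul] <;> field_simp <;> nlinarith [h]
  · have hd : b 1 - a 1 ≠ 0 := sub_ne_zero.mpr (Ne.symm hne)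
    refine ⟨(c 1 - a 1) / (b 1 - a 1), eq_of_coords ?_ ?_⟩ <;>
        simp only [Pi.add_apply, Pi.smul_apply, smul_eq_mul] <;> field_simp <;> nlinarith [h]

lemma mem_hull2 {s : Set (Fin 2 → ℝ)} {u v : Fin 2 → ℝ} (hu : u ∈ s) (hv : v ∈ s)
    {t : ℝ} (h0 : 0 ≤ t) (h1 : t ≤ 1) : (1 - t) • u + t • v ∈ convexHull ℝ s :=
  (convex_convexHull ℝ s) (subset_convexHull ℝ s hu) (subset_convexHull ℝ s hv)
    (by linarith) h0 (by ring)

lemma mem_hull3 {s : Set (Fin 2 → ℝ)} {x a b : Fin 2 → ℝ} (hx : x ∈ s) (ha : a ∈ s)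
    (hb : b ∈ s) {t μ ν : ℝ} (ht : 0 ≤ t) (hμ : 0 ≤ μ) (hν : 0 ≤ ν)
    (hs : t + μ + ν = 1) : t • x + μ • a + ν • b ∈ convexHull ℝ s := by
  have hc := convex_convexHull ℝ s
  have := hc.sum_mem (t := Finset.univ (α := Fin 3)) (w := ![t, μ, ν]) (z := ![x, a, b])
    (by intro i _; fin_cases i <;> simpa) (by simp [Fin.sum_univ_three]; linarith)
    (by intro i _; fin_cases i <;> simp <;> exact subset_convexHull ℝ s (by assumption))
  simpa [Fin.sum_univ_three] using this

lemma cross_mem {a c b d : Fin 2 → ℝ}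
    (hf : cross2 a c b * cross2 a c d < 0)
    (hg : cross2 b d a * cross2 b d c < 0) :
    ∃ x : Fin 2 → ℝ, x ∈ convexHull ℝ {a, c} ∧ x ∈ convexHull ℝ {b, d} := by
  have hbd : b ≠ d := by
    intro h0
    rw [h0, cross2_same, cross2_same] at hg
    simp at hg
  obtain ⟨ga, hga⟩ : ∃ y, y = cross2 b d a := ⟨_, rfl⟩
  obtain ⟨gc, hgc⟩ : ∃ y, y = cross2 b d c := ⟨_, rfl⟩
  rw [← hga, ← hgc] at hg
  have hden : ga - gc ≠ 0 := by
    intro h0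
    rw [sub_eq_zero] at h0
    rw [h0] at hg
    nlinarith [sq_nonneg gc]
  obtain ⟨t, htdef⟩ : ∃ y : ℝ, y = ga / (ga - gc) := ⟨_, rfl⟩
  have ht0 : 0 ≤ t ∧ t ≤ 1 := by
    rcases mul_neg_iff.mp hg with ⟨h1, h2⟩ | ⟨h1, h2⟩
    · constructor
      · rw [htdef]; exact div_nonneg (le_of_lt h1) (by linarith)
      · rw [htdef, div_le_one (by linarith)]; linarith
    · constructor
      · rw [htdef]; exact le_of_lt (div_pos_of_neg_of_neg h1 (by linarith))
      · rw [htdef, div_le_one_of_neg (by linarith)]; linarith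
  obtain ⟨x, hxdef⟩ : ∃ y : Fin 2 → ℝ, y = (1 - t) • a + t • c := ⟨_, rfl⟩
  have hx1 : x ∈ convexHull ℝ ({a, c} : Set (Fin 2 → ℝ)) := by
    rw [hxdef]
    exact mem_hull2 (u := a) (v := c) (Set.mem_insert _ _)
      (Set.mem_insert_of_mem _ (Set.mem_singleton _)) ht0.1 ht0.2
  have hgx : cross2 b d x = 0 := by
    rw [hxdef, cross2_affine, ← hga, ← hgc, htdef]
    field_simp
    ring
  obtain ⟨r, hr⟩ := coll hbd hgx
  have hfx : cross2 a c x = 0 := by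
    rw [hxdef, cross2_affine, cross2_self', cross2_self'']
    ring
  have hfr : (1 - r) * cross2 a c b + r * cross2 a c d = 0 := by
    rw [← cross2_affine, ← hr, hfx]
  have hr0 : 0 ≤ r ∧ r ≤ 1 := by
    rcases mul_neg_iff.mp hf with ⟨h1, h2⟩ | ⟨h1, h2⟩ <;>
      constructor <;> nlinarith
  refine ⟨x, hx1, ?_⟩
  rw [hr]
  exact mem_hull2 (u := b) (v := d) (Set.mem_insert _ _)
    (Set.mem_insert_of_mem _ (Set.mem_singleton _)) hr0.1 hr0.2

lemma tri_cover_aux {x a b c q : Fin 2 → ℝ} {α β γ la lb lc : ℝ}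
    (hγ : 0 ≤ γ) (hsum : α + β + γ = 1)
    (hq : q = α • a + β • b + γ • c)
    (hl : la + lb + lc = 1) (hx : x = la • a + lb • b + lc • c)
    (hc : 0 < lc) (h1 : γ * la ≤ α * lc) (h2 : γ * lb ≤ β * lc) :
    q ∈ convexHull ℝ {x, a, b} := by
  obtain ⟨t, ht⟩ : ∃ y : ℝ, y = γ / lc := ⟨_, rfl⟩
  have htc : t * lc = γ := by rw [ht]; field_simp
  have ht0 : 0 ≤ t := by rw [ht]; positivity
  have hμ : 0 ≤ α - t * la := by
    rw [ht, sub_nonneg, div_mul_eq_mul_div, div_le_iff₀ hc]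
    linarith
  have hν : 0 ≤ β - t * lb := by
    rw [ht, sub_nonneg, div_mul_eq_mul_div, div_le_iff₀ hc]
    linarith
  have hkey : q = t • x + (α - t * la) • a + (β - t * lb) • b := by
    have h1' := congrFun hq; have h2' := congrFun hx
    simp only [Pi.add_apply, Pi.smul_apply, smul_eq_mul] at h1' h2'
    apply eq_of_coords <;> simp only [Pi.add_apply, Pi.smul_apply, smul_eq_mul]
    · rw [h1' 0, h2' 0]; linear_combination (-c 0) * htc
    · rw [h1' 1, h2' 1]; linear_combination (-c 1) * htc
  rw [hkey]
  exact mem_hull3 (Set.mem_insert _ _)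
    (Set.mem_insert_of_mem _ (Set.mem_insert _ _))
    (Set.mem_insert_of_mem _ (Set.mem_insert_of_mem _ (Set.mem_singleton _)))
    ht0 hμ hν (by nlinarith [htc])

set_option maxHeartbeats 1000000 in
lemma tri_cover {x a b c q : Fin 2 → ℝ} {α β γ : ℝ}
    (hα : 0 ≤ α) (hβ : 0 ≤ β) (hγ : 0 ≤ γ) (hsum : α + β + γ = 1)
    (hq : q = α • a + β • b + γ • c) :
    q ∈ convexHull ℝ {x, a, b} ∪ convexHull ℝ {x, a, c} ∪ convexHull ℝ {x, b, c} := by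
  have mxab : x ∈ ({x, a, b} : Set (Fin 2 → ℝ)) := Set.mem_insert _ _
  have maab : a ∈ ({x, a, b} : Set (Fin 2 → ℝ)) := Set.mem_insert_of_mem _ (Set.mem_insert _ _)
  have mbab : b ∈ ({x, a, b} : Set (Fin 2 → ℝ)) :=
    Set.mem_insert_of_mem _ (Set.mem_insert_of_mem _ (Set.mem_singleton _))
  have mxac : x ∈ ({x, a, c} : Set (Fin 2 → ℝ)) := Set.mem_insert _ _
  have maac : a ∈ ({x, a, c} : Set (Fin 2 → ℝ)) := Set.mem_insert_of_mem _ (Set.mem_insert _ _)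
  have mcac : c ∈ ({x, a, c} : Set (Fin 2 → ℝ)) :=
    Set.mem_insert_of_mem _ (Set.mem_insert_of_mem _ (Set.mem_singleton _))
  have mxbc : x ∈ ({x, b, c} : Set (Fin 2 → ℝ)) := Set.mem_insert _ _
  have mbbc : b ∈ ({x, b, c} : Set (Fin 2 → ℝ)) := Set.mem_insert_of_mem _ (Set.mem_insert _ _)
  have mcbc : c ∈ ({x, b, c} : Set (Fin 2 → ℝ)) :=
    Set.mem_insert_of_mem _ (Set.mem_insert_of_mem _ (Set.mem_singleton _))
  simp only [Set.mem_union]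
  by_cases hD : cross2 a b c = 0
  · -- degenerate case: a, b, c collinear
    by_cases hab : a = b
    · refine Or.inl (Or.inr ?_)
      have hkey : q = (0:ℝ) • x + (α + β) • a + γ • c := by rw [hq, ← hab]; module
      rw [hkey]
      exact mem_hull3 mxac maac mcac le_rfl (by linarith) hγ (by linarith)
    · obtain ⟨r, hr⟩ := coll hab hD
      rcases le_or_gt 0 r with h0r | h0r
      · rcases le_or_gt r 1 with h1r | h1r
        · refine Or.inl (Or.inl ?_)
          have hkey : q = (0:ℝ) • x + (α + γ * (1 - r)) • a + (β + γ * r) • b := by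
            rw [hq, hr]; module
          rw [hkey]
          exact mem_hull3 mxab maab mbab le_rfl
            (by nlinarith) (by nlinarith) (by linear_combination hsum)
        · refine Or.inl (Or.inr ?_)
          have hrne : r ≠ 0 := by linarith
          have hkey : q = (0:ℝ) • x + (α + β * (r - 1) / r) • a + (γ + β / r) • c := by
            apply eq_of_coords <;>
              simp only [Pi.add_apply, Pi.smul_apply, smul_eq_mul]
            · have hq0 := congrFun hq 0
              have hr0 := congrFun hr 0
              simp only [Pi.add_apply, Pi.smul_apply, smul_eq_mul] at hq0 hr0
              rw [hq0, hr0]; field_simp; ring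
            · have hq1 := congrFun hq 1
              have hr1 := congrFun hr 1
              simp only [Pi.add_apply, Pi.smul_apply, smul_eq_mul] at hq1 hr1
              rw [hq1, hr1]; field_simp; ring
          rw [hkey]
          refine mem_hull3 mxac maac mcac le_rfl ?_ ?_ ?_
          · have h : 0 ≤ β * (r - 1) / r := div_nonneg (by nlinarith) (by linarith)
            linarith
          · have h : 0 ≤ β / r := div_nonneg hβ (by linarith)
            linarith
          · field_simp
            linear_combination r * hsum
      · refine Or.inr ?_
        have hrne : (1 : ℝ) - r ≠ 0 := by linarith
        have hkey : q = (0:ℝ) • x + (β + α * (-r) / (1 - r)) • b + (γ + α / (1 - r)) • c := by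
          apply eq_of_coords <;>
            simp only [Pi.add_apply, Pi.smul_apply, smul_eq_mul]
          · have hq0 := congrFun hq 0
            have hr0 := congrFun hr 0
            simp only [Pi.add_apply, Pi.smul_apply, smul_eq_mul] at hq0 hr0
            rw [hq0, hr0]; field_simp; ring
          · have hq1 := congrFun hq 1
            have hr1 := congrFun hr 1
            simp only [Pi.add_apply, Pi.smul_apply, smul_eq_mul] at hq1 hr1
            rw [hq1, hr1]; field_simp; ring
        rw [hkey]
        refine mem_hull3 mxbc mbbc mcbc le_rfl ?_ ?_ ?_
        · have h : 0 ≤ α * (-r) / (1 - r) := div_nonneg (by nlinarith) (by linarith)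
          linarith
        · have h : 0 ≤ α / (1 - r) := div_nonneg hα (by linarith)
          linarith
        · field_simp
          linear_combination (1 - r) * hsum
  · -- nondegenerate case
    obtain ⟨la, hla⟩ : ∃ y : ℝ, y = cross2 x b c / cross2 a b c := ⟨_, rfl⟩
    obtain ⟨lb, hlb⟩ : ∃ y : ℝ, y = cross2 a x c / cross2 a b c := ⟨_, rfl⟩
    obtain ⟨lc, hlc⟩ : ∃ y : ℝ, y = cross2 a b x / cross2 a b c := ⟨_, rfl⟩
    have hl : la + lb + lc = 1 := by
      rw [hla, hlb, hlc]; field_simp; linear_combination cross2_sum a b c x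
    have hx : x = la • a + lb • b + lc • c := by
      rw [hla, hlb, hlc]
      apply eq_of_coords <;>
        simp only [Pi.add_apply, Pi.smul_apply, smul_eq_mul] <;>
        field_simp <;> simp only [cross2] <;> ring
    have hq2 : q = α • a + γ • c + β • b := by rw [hq]; module
    have hx2 : x = la • a + lc • c + lb • b := by rw [hx]; module
    have hq3 : q = β • b + γ • c + α • a := by rw [hq]; module
    have hx3 : x = lb • b + lc • c + la • a := by rw [hx]; module
    have useC : 0 < lc → γ * la ≤ α * lc → γ * lb ≤ β * lc →
        q ∈ convexHull ℝ {x, a, b} :=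
      fun h u v => tri_cover_aux hγ hsum hq hl hx h u v
    have useB : 0 < lb → β * la ≤ α * lb → β * lc ≤ γ * lb →
        q ∈ convexHull ℝ {x, a, c} :=
      fun h u v => tri_cover_aux hβ (by linarith) hq2 (by linarith) hx2 h u v
    have useA : 0 < la → α * lb ≤ β * la → α * lc ≤ γ * la →
        q ∈ convexHull ℝ {x, b, c} :=
      fun h u v => tri_cover_aux hα (by linarith) hq3 (by linarith) hx3 h u v
    by_cases ha : 0 < la <;> by_cases hb : 0 < lb <;> by_cases hc : 0 < lc
    · rcases le_total (α * lb) (β * la) with h1 | h1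
      · rcases le_total (β * lc) (γ * lb) with h2 | h2
        · have h3 : α * lc ≤ γ * la := by
            have k1 : α * lb * lc ≤ β * la * lc := mul_le_mul_of_nonneg_right h1 hc.le
            have k2 : β * lc * la ≤ γ * lb * la := mul_le_mul_of_nonneg_right h2 ha.le
            have k3 : α * lc * lb ≤ γ * la * lb := by nlinarith [k1, k2]
            exact le_of_mul_le_mul_right k3 hb
          exact Or.inr (useA ha h1 h3)
        · rcases le_total (α * lc) (γ * la) with h3 | h3
          · exact Or.inr (useA ha h1 h3)
          · exact Or.inl (Or.inl (useC hc h3 h2))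
      · rcases le_total (β * lc) (γ * lb) with h2 | h2
        · exact Or.inl (Or.inr (useB hb h1 h2))
        · have h3 : γ * la ≤ α * lc := by
            have k1 : β * la * lc ≤ α * lb * lc := mul_le_mul_of_nonneg_right h1 hc.le
            have k2 : γ * lb * la ≤ β * lc * la := mul_le_mul_of_nonneg_right h2 ha.le
            have k3 : γ * la * lb ≤ α * lc * lb := by nlinarith [k1, k2]
            exact le_of_mul_le_mul_right k3 hb
          exact Or.inl (Or.inl (useC hc h3 h2))
    · have hc' : lc ≤ 0 := not_lt.mp hc
      rcases le_total (α * lb) (β * la) with h1 | h1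
      · exact Or.inr (useA ha h1
          (by nlinarith [mul_nonneg hγ ha.le, mul_nonneg hα (neg_nonneg.mpr hc')]))
      · exact Or.inl (Or.inr (useB hb h1
          (by nlinarith [mul_nonneg hγ hb.le, mul_nonneg hβ (neg_nonneg.mpr hc')])))
    · have hb' : lb ≤ 0 := not_lt.mp hb
      rcases le_total (α * lc) (γ * la) with h3 | h3
      · exact Or.inr (useA ha
          (by nlinarith [mul_nonneg hβ ha.le, mul_nonneg hα (neg_nonneg.mpr hb')]) h3)
      · exact Or.inl (Or.inl (useC hc h3
          (by nlinarith [mul_nonneg hβ hc.le, mul_nonneg hγ (neg_nonneg.mpr hb')])))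
    · have hb' : lb ≤ 0 := not_lt.mp hb
      have hc' : lc ≤ 0 := not_lt.mp hc
      exact Or.inr (useA ha
        (by nlinarith [mul_nonneg hβ ha.le, mul_nonneg hα (neg_nonneg.mpr hb')])
        (by nlinarith [mul_nonneg hγ ha.le, mul_nonneg hα (neg_nonneg.mpr hc')]))
    · have ha' : la ≤ 0 := not_lt.mp ha
      rcases le_total (β * lc) (γ * lb) with h2 | h2
      · exact Or.inl (Or.inr (useB hb
          (by nlinarith [mul_nonneg hα hb.le, mul_nonneg hβ (neg_nonneg.mpr ha')]) h2))
      · exact Or.inl (Or.inl (useC hc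
          (by nlinarith [mul_nonneg hα hc.le, mul_nonneg hγ (neg_nonneg.mpr ha')]) h2))
    · have ha' : la ≤ 0 := not_lt.mp ha
      have hc' : lc ≤ 0 := not_lt.mp hc
      exact Or.inl (Or.inr (useB hb
        (by nlinarith [mul_nonneg hα hb.le, mul_nonneg hβ (neg_nonneg.mpr ha')])
        (by nlinarith [mul_nonneg hγ hb.le, mul_nonneg hβ (neg_nonneg.mpr hc')])))
    · have ha' : la ≤ 0 := not_lt.mp ha
      have hb' : lb ≤ 0 := not_lt.mp hb
      exact Or.inl (Or.inl (useC hc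
        (by nlinarith [mul_nonneg hα hc.le, mul_nonneg hγ (neg_nonneg.mpr ha')])
        (by nlinarith [mul_nonneg hβ hc.le, mul_nonneg hγ (neg_nonneg.mpr hb')])))
    · exact absurd hl (by push_neg at ha hb hc; nlinarith)

section
variable {m : ℕ} [NeZero m] {p : Fin m → Fin 2 → ℝ}

lemma natCast_mod_self (s : ℕ) : ((s % m : ℕ) : Fin m) = (s : Fin m) := by
  apply Fin.ext
  simp [Fin.val_natCast, Nat.mod_mod_of_dvd s (dvd_refl m)]

lemma castFin_ne {s t : ℕ} (hs : s < m) (ht : t < m) (h : s ≠ t) :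
    (s : Fin m) ≠ (t : Fin m) := by
  intro he
  apply h
  have h2 := congrArg Fin.val he
  rwa [Fin.val_natCast, Fin.val_natCast, Nat.mod_eq_of_lt hs, Nat.mod_eq_of_lt ht] at h2

lemma addCast_ne {a : Fin m} {s t : ℕ} (hs : s < m) (ht : t < m) (h : s ≠ t) :
    a + (s : Fin m) ≠ a + (t : Fin m) := fun he => castFin_ne hs ht h (add_left_cancel he)

lemma addCast_succ (a : Fin m) (t : ℕ) :
    a + (t : Fin m) + 1 = a + ((t + 1 : ℕ) : Fin m) := by
  rw [add_assoc]
  norm_num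

lemma add_val_sub {a b : Fin m} (h : a ≤ b) : a + ((b.val - a.val : ℕ) : Fin m) = b := by
  have hab : a.val ≤ b.val := h
  apply Fin.ext
  have hb := b.isLt
  rw [Fin.val_add, Fin.val_natCast,
    Nat.mod_eq_of_lt (show b.val - a.val < m by omega),
    show a.val + (b.val - a.val) = b.val from by omega,
    Nat.mod_eq_of_lt b.isLt]

lemma edge_sign (hm : 4 ≤ m) (hp : InCircularConvexPosition p) (i j : Fin m)
    (h1 : j ≠ i) (h2 : j ≠ i + 1) :
    0 < cross2 (p 0) (p 1) (p 2) * cross2 (p i) (p (i + 1)) (p j) := by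
  have hm0 : 0 < m := by omega
  have aux : ∀ n : ℕ, n < m → ∀ j : Fin m, j ≠ (n : Fin m) → j ≠ (n : Fin m) + 1 →
      0 < cross2 (p 0) (p 1) (p 2) * cross2 (p (n : Fin m)) (p ((n : Fin m) + 1)) (p j) := by
    intro n
    induction n with
    | zero =>
      intro _ j hj1 hj2
      have e0 : ((0 : ℕ) : Fin m) = 0 := Nat.cast_zero
      rw [e0] at hj1 hj2 ⊢
      have n2 : ((2 : ℕ) : Fin m) = 2 := by norm_cast
      have h20 : (2 : Fin m) ≠ 0 := by
        rw [← n2, ← Nat.cast_zero]; exact castFin_ne (by omega) hm0 (by omega)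
      have h21 : (2 : Fin m) ≠ 0 + 1 := by
        rw [zero_add, ← n2, ← Nat.cast_one]; exact castFin_ne (by omega) (by omega) (by omega)
      have := hp 0 j 2 hj1 hj2 h20 h21
      rw [zero_add] at this ⊢
      linarith [this]
    | succ n ih =>
      intro hn j hj1 hj2
      have hnm : n < m := by omega
      -- the auxiliary point n+2 (reduced mod m)
      have hd1 : ((n + 2 : ℕ) : Fin m) ≠ (n : Fin m) := by
        rcases eq_or_lt_of_le (show n + 2 ≤ m by omega) with he | hlt
        · rw [he, Fin.natCast_self, ← Nat.cast_zero]
          exact castFin_ne (by omega) hnm (by omega)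
        · exact castFin_ne hlt hnm (by omega)
      have hd2 : ((n + 2 : ℕ) : Fin m) ≠ ((n + 1 : ℕ) : Fin m) := by
        rcases eq_or_lt_of_le (show n + 2 ≤ m by omega) with he | hlt
        · rw [he, Fin.natCast_self, ← Nat.cast_zero]
          exact castFin_ne (by omega) hn (by omega)
        · exact castFin_ne hlt hn (by omega)
      have hstep : ((n : Fin m)) + 1 = ((n + 1 : ℕ) : Fin m) := by push_cast; ring
      have hstep2 : ((n + 1 : ℕ) : Fin m) + 1 = ((n + 2 : ℕ) : Fin m) := by push_cast; rw [add_assoc, one_add_one_eq_two]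
      have h1 := ih hnm ((n + 2 : ℕ) : Fin m) hd1 (by rw [hstep]; exact hd2)
      rw [hstep] at h1
      have hn1 : (n : Fin m) ≠ ((n + 1 : ℕ) : Fin m) := castFin_ne hnm hn (by omega)
      have hn2 : (n : Fin m) ≠ ((n + 1 : ℕ) : Fin m) + 1 := by rw [hstep2]; exact hd1.symm
      have hedge := hp ((n + 1 : ℕ) : Fin m) j (n : Fin m) hj1 hj2 hn1 hn2
      have h1' : 0 < cross2 (p 0) (p 1) (p 2) *
          cross2 (p ((n + 1 : ℕ) : Fin m)) (p (((n + 1 : ℕ) : Fin m) + 1)) (p (n : Fin m)) := by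
        rw [hstep2]
        have hrot : cross2 (p ((n + 1 : ℕ) : Fin m)) (p ((n + 2 : ℕ) : Fin m)) (p (n : Fin m)) =
            cross2 (p (n : Fin m)) (p ((n + 1 : ℕ) : Fin m)) (p ((n + 2 : ℕ) : Fin m)) := by
          unfold cross2; ring
        rw [hrot]
        exact h1
      exact sign_trans h1' hedge
  have hi := aux i.val i.isLt j
  rw [Fin.cast_val_eq_self] at hi
  exact hi h1 h2


lemma edge_sign' (hm : 4 ≤ m) (hp : InCircularConvexPosition p) (a : Fin m) {s t : ℕ}
    (hs : s < m) (ht : t < m) (h1 : t ≠ s) (h2 : t ≠ (s + 1) % m) :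
    0 < cross2 (p 0) (p 1) (p 2) *
      cross2 (p (a + (s : Fin m))) (p (a + ((s + 1 : ℕ) : Fin m))) (p (a + (t : Fin m))) := by
  have hm0 : 0 < m := by omega
  have hne1 : a + (t : Fin m) ≠ a + (s : Fin m) := addCast_ne ht hs h1
  have hne2 : a + (t : Fin m) ≠ a + (s : Fin m) + 1 := by
    rw [addCast_succ, ← natCast_mod_self (s + 1)]
    exact addCast_ne ht (Nat.mod_lt _ hm0) h2
  have := edge_sign hm hp (a + (s : Fin m)) (a + (t : Fin m)) hne1 hne2
  rwa [addCast_succ] at this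

lemma chord (hm : 4 ≤ m) (hp : InCircularConvexPosition p) (a : Fin m) :
    ∀ d : ℕ, 1 ≤ d → d < m →
      (∀ t : ℕ, 0 < t → t < d →
        0 < cross2 (p 0) (p 1) (p 2) *
          (- cross2 (p a) (p (a + (d : Fin m))) (p (a + (t : Fin m))))) ∧
      (∀ u : ℕ, d < u → u < m →
        0 < cross2 (p 0) (p 1) (p 2) *
          cross2 (p a) (p (a + (d : Fin m))) (p (a + (u : Fin m)))) := by
  have hm0 : 0 < m := by omega
  have ha0 : a + ((0 : ℕ) : Fin m) = a := by simp
  intro d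
  induction d with
  | zero => omega
  | succ d ih =>
    intro _ hdm
    by_cases hd0 : d = 0
    · subst hd0
      refine ⟨by omega, ?_⟩
      intro u hu hum
      have := edge_sign' hm hp a (show 0 < m by omega) hum
        (by omega) (by rw [Nat.mod_eq_of_lt (by omega)]; omega)
      rwa [ha0] at this
    · have hd1 : 1 ≤ d := by omega
      obtain ⟨ih1, ih2⟩ := ih hd1 (by omega)
      have hACD : 0 < cross2 (p 0) (p 1) (p 2) *
          cross2 (p a) (p (a + (d : Fin m))) (p (a + ((d + 1 : ℕ) : Fin m))) :=
        ih2 (d + 1) (by omega) hdm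
      constructor
      · -- near side
        intro t ht0 htd
        by_cases htd' : t = d
        · subst htd'
          rw [show - cross2 (p a) (p (a + ((t + 1 : ℕ) : Fin m))) (p (a + (t : Fin m)))
              = cross2 (p a) (p (a + (t : Fin m))) (p (a + ((t + 1 : ℕ) : Fin m))) from by
            unfold cross2; ring]
          exact hACD
        · by_cases ht1 : t = 1
          · subst ht1
            -- use the edge at a
            have hE := edge_sign' hm hp a (show 0 < m by omega) (show d + 1 < m from hdm)
              (by omega) (by rw [Nat.mod_eq_of_lt (by omega)]; omega)
            rw [ha0, show ((0 + 1 : ℕ) : Fin m) = ((1 : ℕ) : Fin m) from by norm_num] at hE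
            rw [show - cross2 (p a) (p (a + ((d + 1 : ℕ) : Fin m))) (p (a + ((1 : ℕ) : Fin m)))
                = cross2 (p a) (p (a + ((1 : ℕ) : Fin m))) (p (a + ((d + 1 : ℕ) : Fin m))) from by
              unfold cross2; ring]
            exact hE
          · -- 1 < t < d
            have hACK := ih1 t ht0 (by omega)
            have hCDK := edge_sign' hm hp a (show d < m by omega) (show t < m by omega)
              (by omega) (by rw [Nat.mod_eq_of_lt (by omega)]; omega)
            have hfC := edge_sign' hm hp a (show 0 < m by omega) (show d < m by omega)
              (by omega) (by rw [Nat.mod_eq_of_lt (by omega)]; omega)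
            have hfD := edge_sign' hm hp a (show 0 < m by omega) (show d + 1 < m from hdm)
              (by omega) (by rw [Nat.mod_eq_of_lt (by omega)]; omega)
            have hfK := edge_sign' hm hp a (show 0 < m by omega) (show t < m by omega)
              (by omega) (by rw [Nat.mod_eq_of_lt (by omega)]; omega)
            rw [ha0] at hfC hfD hfK
            set e := cross2 (p 0) (p 1) (p 2)
            set A := p a
            rw [show ((0 + 1 : ℕ) : Fin m) = ((1 : ℕ) : Fin m) from by norm_num] at hfC hfD hfK
            set A' := p (a + ((1 : ℕ) : Fin m))
            set C := p (a + (d : Fin m))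
            set D := p (a + ((d + 1 : ℕ) : Fin m))
            set K := p (a + (t : Fin m))
            have key2 : (e * cross2 A C D) * (e * cross2 A A' K)
                + (e * cross2 A D K) * (e * cross2 A A' C)
                + (e * (- cross2 A C K)) * (e * cross2 A A' D) = 0 := by
              unfold cross2; ring
            nlinarith [key2, mul_pos hACD hfK, mul_pos hACK hfD, hfC]
      · -- far side
        intro u hu hum
        by_cases humm : u = m - 1
        · subst humm
          have hE := edge_sign' hm hp a (show m - 1 < m by omega) (show d + 1 < m from hdm)
            (by omega) (by rw [show m - 1 + 1 = m from by omega, Nat.mod_self]; omega)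
          rw [show (m - 1 + 1 : ℕ) = m from by omega, Fin.natCast_self, add_zero] at hE
          rw [show cross2 (p a) (p (a + ((d + 1 : ℕ) : Fin m))) (p (a + ((m - 1 : ℕ) : Fin m)))
              = cross2 (p (a + ((m - 1 : ℕ) : Fin m))) (p a) (p (a + ((d + 1 : ℕ) : Fin m))) from by
            unfold cross2; ring]
          exact hE
        · -- u + 1 < m
          have hACK := ih2 u (by omega) hum
          have hCDK := edge_sign' hm hp a (show d < m by omega) (show u < m by omega)
            (by omega) (by rw [Nat.mod_eq_of_lt (by omega)]; omega)
          have hKA := edge_sign' hm hp a (show u < m by omega) (show 0 < m by omega)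
            (by omega) (by rw [Nat.mod_eq_of_lt (by omega)]; omega)
          have hKC := edge_sign' hm hp a (show u < m by omega) (show d < m by omega)
            (by omega) (by rw [Nat.mod_eq_of_lt (by omega)]; omega)
          have hKD := edge_sign' hm hp a (show u < m by omega) (show d + 1 < m from hdm)
            (by omega) (by rw [Nat.mod_eq_of_lt (by omega)]; omega)
          rw [ha0] at hKA
          rw [show ((u + 1 : ℕ) : Fin m) = ((u + 1 : ℕ) : Fin m) from rfl] at hKA
          set e := cross2 (p 0) (p 1) (p 2)
          set A := p a
          set C := p (a + (d : Fin m))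
          set D := p (a + ((d + 1 : ℕ) : Fin m))
          set K := p (a + (u : Fin m))
          set K' := p (a + ((u + 1 : ℕ) : Fin m))
          have key2 : (e * cross2 C D K) * (e * cross2 K K' A)
              + (e * (- cross2 A D K)) * (e * cross2 K K' C)
              + (e * cross2 A C K) * (e * cross2 K K' D) = 0 := by
            unfold cross2; ring
          nlinarith [key2, mul_pos hCDK hKA, mul_pos hACK hKD, hKC]

lemma triple_sign (hm : 4 ≤ m) (hp : InCircularConvexPosition p) (a : Fin m) {t d : ℕ}
    (h0 : 0 < t) (htd : t < d) (hdm : d < m) :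
    0 < cross2 (p 0) (p 1) (p 2) * cross2 (p a) (p (a + (t : Fin m))) (p (a + (d : Fin m))) := by
  obtain ⟨h1, -⟩ := chord hm hp a d (by omega) hdm
  have h := h1 t h0 htd
  rw [show cross2 (p a) (p (a + (t : Fin m))) (p (a + (d : Fin m)))
      = - cross2 (p a) (p (a + (d : Fin m))) (p (a + (t : Fin m))) from by unfold cross2; ring]
  exact h

lemma prod_neg {e x y : ℝ} (h1 : 0 < e * (-x)) (h2 : 0 < e * y) : x * y < 0 := by
  rcases mul_pos_iff.mp h1 with ⟨he, hx⟩ | ⟨he, hx⟩ <;>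
    rcases mul_pos_iff.mp h2 with ⟨he', hy⟩ | ⟨he', hy⟩
  · exact mul_neg_of_neg_of_pos (by linarith) hy
  · linarith
  · linarith
  · exact mul_neg_of_pos_of_neg (by linarith) hy

end


/-- Lemma 6 of the paper: if the vertex indices of a convex polygon
(listed in circular order) are partitioned into `I_A, I_B, I_C`, and the vertices of
one of the parts are separated in the circular order by vertices of the other parts,
then the hull of `A ∪ B ∪ C` is covered by the hulls of the pairwise unions. -/
theorem stmt_11 (m : ℕ) [NeZero m] (hm : 4 ≤ m) (p : Fin m → (Fin 2 → ℝ))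
    (hp : InCircularConvexPosition p)
    (IA IB IC : Set (Fin m))
    (hAB : Disjoint IA IB) (hAC : Disjoint IA IC) (hBC : Disjoint IB IC)
    (hcover : IA ∪ IB ∪ IC = Set.univ)
    (i₁ i₂ i₃ i₄ : Fin m) (h12 : i₁ < i₂) (h23 : i₂ < i₃) (h34 : i₃ < i₄)
    (hsep : (i₁ ∈ IA ∧ i₃ ∈ IA ∧ i₂ ∉ IA ∧ i₄ ∉ IA) ∨
            (i₁ ∈ IB ∧ i₃ ∈ IB ∧ i₂ ∉ IB ∧ i₄ ∉ IB) ∨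
            (i₁ ∈ IC ∧ i₃ ∈ IC ∧ i₂ ∉ IC ∧ i₄ ∉ IC)) :
    convexHull ℝ (p '' IA ∪ p '' IB ∪ p '' IC) ⊆
      convexHull ℝ (p '' IA ∪ p '' IB) ∪ convexHull ℝ (p '' IA ∪ p '' IC) ∪
        convexHull ℝ (p '' IB ∪ p '' IC) := by
  have v12 : i₁.val < i₂.val := h12
  have v23 : i₂.val < i₃.val := h23
  have v34 : i₃.val < i₄.val := h34
  have hv4 := i₄.isLt
  have E12 : i₁ + ((i₂.val - i₁.val : ℕ) : Fin m) = i₂ := add_val_sub (le_of_lt h12)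
  have E13 : i₁ + ((i₃.val - i₁.val : ℕ) : Fin m) = i₃ :=
    add_val_sub (le_of_lt (lt_trans h12 h23))
  have E14 : i₁ + ((i₄.val - i₁.val : ℕ) : Fin m) = i₄ :=
    add_val_sub (le_of_lt (lt_trans (lt_trans h12 h23) h34))
  have E23 : i₂ + ((i₃.val - i₂.val : ℕ) : Fin m) = i₃ := add_val_sub (le_of_lt h23)
  have E24 : i₂ + ((i₄.val - i₂.val : ℕ) : Fin m) = i₄ :=
    add_val_sub (le_of_lt (lt_trans h23 h34))
  have S123 : 0 < cross2 (p 0) (p 1) (p 2) * cross2 (p i₁) (p i₂) (p i₃) := by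
    have h := triple_sign hm hp i₁ (t := i₂.val - i₁.val) (d := i₃.val - i₁.val)
      (by omega) (by omega) (by omega)
    rwa [E12, E13] at h
  have S124 : 0 < cross2 (p 0) (p 1) (p 2) * cross2 (p i₁) (p i₂) (p i₄) := by
    have h := triple_sign hm hp i₁ (t := i₂.val - i₁.val) (d := i₄.val - i₁.val)
      (by omega) (by omega) (by omega)
    rwa [E12, E14] at h
  have S134 : 0 < cross2 (p 0) (p 1) (p 2) * cross2 (p i₁) (p i₃) (p i₄) := by
    have h := triple_sign hm hp i₁ (t := i₃.val - i₁.val) (d := i₄.val - i₁.val)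
      (by omega) (by omega) (by omega)
    rwa [E13, E14] at h
  have S234 : 0 < cross2 (p 0) (p 1) (p 2) * cross2 (p i₂) (p i₃) (p i₄) := by
    have h := triple_sign hm hp i₂ (t := i₃.val - i₂.val) (d := i₄.val - i₂.val)
      (by omega) (by omega) (by omega)
    rwa [E23, E24] at h
  have hf : cross2 (p i₁) (p i₃) (p i₂) * cross2 (p i₁) (p i₃) (p i₄) < 0 := by
    refine prod_neg ?_ S134
    rw [show - cross2 (p i₁) (p i₃) (p i₂) = cross2 (p i₁) (p i₂) (p i₃) from by
      unfold cross2; ring]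
    exact S123
  have hg : cross2 (p i₂) (p i₄) (p i₁) * cross2 (p i₂) (p i₄) (p i₃) < 0 := by
    rw [mul_comm]
    refine prod_neg (e := cross2 (p 0) (p 1) (p 2)) ?_ ?_
    · rw [show - cross2 (p i₂) (p i₄) (p i₃) = cross2 (p i₂) (p i₃) (p i₄) from by
        unfold cross2; ring]
      exact S234
    · rw [show cross2 (p i₂) (p i₄) (p i₁) = cross2 (p i₁) (p i₂) (p i₄) from by
        unfold cross2; ring]
      exact S124
  obtain ⟨x, hx13, hx24⟩ := cross_mem hf hg
  have hmem2 : i₂ ∈ IA ∪ IB ∪ IC := by rw [hcover]; trivial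
  have hmem4 : i₄ ∈ IA ∪ IB ∪ IC := by rw [hcover]; trivial
  obtain ⟨hxAB, hxAC, hxBC⟩ : x ∈ convexHull ℝ (p '' IA ∪ p '' IB) ∧
      x ∈ convexHull ℝ (p '' IA ∪ p '' IC) ∧ x ∈ convexHull ℝ (p '' IB ∪ p '' IC) := by
    rcases hsep with ⟨hT1, hT3, hT2, hT4⟩ | ⟨hT1, hT3, hT2, hT4⟩ | ⟨hT1, hT3, hT2, hT4⟩
    · have hxT : x ∈ convexHull ℝ (p '' IA) := by
        refine convexHull_mono ?_ hx13
        intro z hz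
        rcases hz with rfl | hz
        · exact ⟨i₁, hT1, rfl⟩
        · rw [Set.mem_singleton_iff] at hz; subst hz; exact ⟨i₃, hT3, rfl⟩
      have hxO : x ∈ convexHull ℝ (p '' IB ∪ p '' IC) := by
        refine convexHull_mono ?_ hx24
        intro z hz
        rcases hz with rfl | hz
        · rcases hmem2 with (h | h) | h
          · exact absurd h hT2
          · exact Or.inl ⟨i₂, h, rfl⟩
          · exact Or.inr ⟨i₂, h, rfl⟩
        · rw [Set.mem_singleton_iff] at hz; subst hz
          rcases hmem4 with (h | h) | h
          · exact absurd h hT4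
          · exact Or.inl ⟨i₄, h, rfl⟩
          · exact Or.inr ⟨i₄, h, rfl⟩
      exact ⟨convexHull_mono Set.subset_union_left hxT,
        convexHull_mono Set.subset_union_left hxT, hxO⟩
    · have hxT : x ∈ convexHull ℝ (p '' IB) := by
        refine convexHull_mono ?_ hx13
        intro z hz
        rcases hz with rfl | hz
        · exact ⟨i₁, hT1, rfl⟩
        · rw [Set.mem_singleton_iff] at hz; subst hz; exact ⟨i₃, hT3, rfl⟩
      have hxO : x ∈ convexHull ℝ (p '' IA ∪ p '' IC) := by
        refine convexHull_mono ?_ hx24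
        intro z hz
        rcases hz with rfl | hz
        · rcases hmem2 with (h | h) | h
          · exact Or.inl ⟨i₂, h, rfl⟩
          · exact absurd h hT2
          · exact Or.inr ⟨i₂, h, rfl⟩
        · rw [Set.mem_singleton_iff] at hz; subst hz
          rcases hmem4 with (h | h) | h
          · exact Or.inl ⟨i₄, h, rfl⟩
          · exact absurd h hT4
          · exact Or.inr ⟨i₄, h, rfl⟩
      exact ⟨convexHull_mono Set.subset_union_right hxT, hxO,
        convexHull_mono Set.subset_union_left hxT⟩
    · have hxT : x ∈ convexHull ℝ (p '' IC) := by
        refine convexHull_mono ?_ hx13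
        intro z hz
        rcases hz with rfl | hz
        · exact ⟨i₁, hT1, rfl⟩
        · rw [Set.mem_singleton_iff] at hz; subst hz; exact ⟨i₃, hT3, rfl⟩
      have hxO : x ∈ convexHull ℝ (p '' IA ∪ p '' IB) := by
        refine convexHull_mono ?_ hx24
        intro z hz
        rcases hz with rfl | hz
        · rcases hmem2 with (h | h) | h
          · exact Or.inl ⟨i₂, h, rfl⟩
          · exact Or.inr ⟨i₂, h, rfl⟩
          · exact absurd h hT2
        · rw [Set.mem_singleton_iff] at hz; subst hz
          rcases hmem4 with (h | h) | h
          · exact Or.inl ⟨i₄, h, rfl⟩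
          · exact Or.inr ⟨i₄, h, rfl⟩
          · exact absurd h hT4
      exact ⟨hxO, convexHull_mono Set.subset_union_right hxT,
        convexHull_mono Set.subset_union_right hxT⟩
  intro q hq
  by_cases hA : IA = ∅
  · rw [hA] at hq
    simp only [Set.image_empty, Set.empty_union] at hq
    exact Set.mem_union_right _ hq
  by_cases hB : IB = ∅
  · rw [hB] at hq
    simp only [Set.image_empty, Set.union_empty, Set.empty_union] at hq
    exact Set.mem_union_left _ (Set.mem_union_right _ hq)
  by_cases hC : IC = ∅
  · rw [hC] at hq
    simp only [Set.image_empty, Set.union_empty] at hq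
    exact Set.mem_union_left _ (Set.mem_union_left _ hq)
  have hAne : (p '' IA).Nonempty :=
    (Set.nonempty_iff_ne_empty.mpr hA).image p
  have hBne : (p '' IB).Nonempty :=
    (Set.nonempty_iff_ne_empty.mpr hB).image p
  have hCne : (p '' IC).Nonempty :=
    (Set.nonempty_iff_ne_empty.mpr hC).image p
  rw [Set.union_assoc, convexHull_union hAne (hBne.mono Set.subset_union_left)] at hq
  obtain ⟨b1, hb1, w, hw, hqseg⟩ := mem_convexJoin.mp hq
  rw [convexHull_union hBne hCne] at hw
  obtain ⟨b2, hb2, b3, hb3, hwseg⟩ := mem_convexJoin.mp hw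
  obtain ⟨u, u', hu, hu', huu, hqe⟩ := hqseg
  obtain ⟨v, v', hv, hv', hvv, hwe⟩ := hwseg
  have hqe2 : q = u • b1 + (u' * v) • b2 + (u' * v') • b3 := by
    rw [← hqe, ← hwe]; module
  have hcov := tri_cover (x := x) hu (mul_nonneg hu' hv) (mul_nonneg hu' hv')
    (by linear_combination huu + u' * hvv) hqe2
  have c1 : convexHull ℝ {x, b1, b2} ⊆ convexHull ℝ (p '' IA ∪ p '' IB) := by
    apply convexHull_min ?_ (convex_convexHull ℝ _)
    intro z hz
    rcases hz with rfl | hz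
    · exact hxAB
    rcases hz with rfl | hz
    · exact convexHull_mono Set.subset_union_left hb1
    rw [Set.mem_singleton_iff] at hz; subst hz
    exact convexHull_mono Set.subset_union_right hb2
  have c2 : convexHull ℝ {x, b1, b3} ⊆ convexHull ℝ (p '' IA ∪ p '' IC) := by
    apply convexHull_min ?_ (convex_convexHull ℝ _)
    intro z hz
    rcases hz with rfl | hz
    · exact hxAC
    rcases hz with rfl | hz
    · exact convexHull_mono Set.subset_union_left hb1
    rw [Set.mem_singleton_iff] at hz; subst hz
    exact convexHull_mono Set.subset_union_right hb3
  have c3 : convexHull ℝ {x, b2, b3} ⊆ convexHull ℝ (p '' IB ∪ p '' IC) := by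
    apply convexHull_min ?_ (convex_convexHull ℝ _)
    intro z hz
    rcases hz with rfl | hz
    · exact hxBC
    rcases hz with rfl | hz
    · exact convexHull_mono Set.subset_union_left hb2
    rw [Set.mem_singleton_iff] at hz; subst hz
    exact convexHull_mono Set.subset_union_right hb3
  rcases hcov with (h | h) | h
  · exact Set.mem_union_left _ (Set.mem_union_left _ (c1 h))
  · exact Set.mem_union_left _ (Set.mem_union_right _ (c2 h))
  · exact Set.mem_union_right _ (c3 h)
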